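/- The empirical quantile is strongly consistent: for every a ∈ (0,1), the sample quantile \hat G_n^{-1}(a) = X_{(⌈na⌉)} converges almost surely to G^{-1}(a) as n → ∞. -/

import Mathlib

open MeasureTheory ProbabilityTheory Filter Set
open scoped Classical

noncomputable section

/-- The cumulative distribution function of a probability measure `μ` on `ℝ`:
`G(x) = μ((-∞, x])`. -/
def popCDF (μ : Measure ℝ) (x : ℝ) : ℝ := (μ (Iic x)).toReal

/-- The quantile function `G⁻¹(a) = inf {x : a ≤ G(x)}`. -/
def popQuantile (μ : Measure ℝ) (a : ℝ) : ℝ := sInf {x : ℝ | a ≤ popCDF μ x}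

/-- Upper quantile `η^u = G⁻¹(1 - α)`. -/
def etaU (μ : Measure ℝ) (α : ℝ) : ℝ := popQuantile μ (1 - α)

/-- Lower quantile `η^l = G⁻¹(α)`. -/
def etaL (μ : Measure ℝ) (α : ℝ) : ℝ := popQuantile μ α

/-- Conditional CDF of `X - η^u` given `X > η^u`, evaluated at `t`. -/
def tailCDFU (μ : Measure ℝ) (α t : ℝ) : ℝ :=
  (μ (Ioc (etaU μ α) (etaU μ α + t))).toReal / (μ (Ioi (etaU μ α))).toReal

/-- Conditional CDF of `η^l - X` given `X < η^l`, evaluated at `t`. -/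
def tailCDFL (μ : Measure ℝ) (α t : ℝ) : ℝ :=
  (μ (Ico (etaL μ α - t) (etaL μ α))).toReal / (μ (Iio (etaL μ α))).toReal

/-- `s^u`: the median of the conditional distribution of `X - η^u` given `X > η^u`. -/
def sU (μ : Measure ℝ) (α : ℝ) : ℝ := sInf {t : ℝ | 1 / 2 ≤ tailCDFU μ α t}

/-- `s^l`: the median of the conditional distribution of `η^l - X` given `X < η^l`. -/
def sL (μ : Measure ℝ) (α : ℝ) : ℝ := sInf {t : ℝ | 1 / 2 ≤ tailCDFL μ α t}

/-- Scaled upper tail distribution `F^u(t) = P((X - η^u)/s^u ≤ t | X > η^u)`. -/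
def FU (μ : Measure ℝ) (α t : ℝ) : ℝ := tailCDFU μ α (sU μ α * t)

/-- Scaled lower tail distribution `F^l(t) = P((η^l - X)/s^l ≤ t | X < η^l)`. -/
def FL (μ : Measure ℝ) (α t : ℝ) : ℝ := tailCDFL μ α (sL μ α * t)

/-- The reference distribution `F₀(t) = 1 - exp(-log 2 · t)`. -/
def F0 (t : ℝ) : ℝ := 1 - Real.exp (-Real.log 2 * t)

/-- The threshold `t₀ = 1 / log 2`. -/
def t0 : ℝ := 1 / Real.log 2

/-- The multiset of the first `n` observations of the process `X` at outcome `ω`. -/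
def sample {Ω : Type*} (X : ℕ → Ω → ℝ) (n : ℕ) (ω : Ω) : Multiset ℝ :=
  (Finset.range n).val.map fun i => X i ω

/-- The `k`-th order statistic (1-indexed) of a finite multiset of reals. -/
def orderStat (s : Multiset ℝ) (k : ℕ) : ℝ := (s.sort (· ≤ ·)).getD (k - 1) 0

/-- The sample median of a finite multiset of `m` reals: its `⌈m/2⌉`-th order statistic. -/
def sampleMedian (s : Multiset ℝ) : ℝ := orderStat s (Nat.ceil ((s.card : ℝ) / 2))

/-- The sample upper quantile `η̂^u_n = X_(⌈n(1-α)⌉)`. -/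
def etaUn {Ω : Type*} (X : ℕ → Ω → ℝ) (α : ℝ) (n : ℕ) (ω : Ω) : ℝ :=
  orderStat (sample X n ω) (Nat.ceil ((n : ℝ) * (1 - α)))

/-- The sample lower quantile `η̂^l_n = X_(⌈nα⌉)`. -/
def etaLn {Ω : Type*} (X : ℕ → Ω → ℝ) (α : ℝ) (n : ℕ) (ω : Ω) : ℝ :=
  orderStat (sample X n ω) (Nat.ceil ((n : ℝ) * α))

/-- The sample upper tail scale `ŝ^u_n = med{X_i - η̂^u_n : X_i > η̂^u_n}`. -/
def sUn {Ω : Type*} (X : ℕ → Ω → ℝ) (α : ℝ) (n : ℕ) (ω : Ω) : ℝ :=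
  sampleMedian (((sample X n ω).filter fun x => etaUn X α n ω < x).map
    fun x => x - etaUn X α n ω)

/-- The sample lower tail scale `ŝ^l_n = med{η̂^l_n - X_i : X_i < η̂^l_n}`. -/
def sLn {Ω : Type*} (X : ℕ → Ω → ℝ) (α : ℝ) (n : ℕ) (ω : Ω) : ℝ :=
  sampleMedian (((sample X n ω).filter fun x => x < etaLn X α n ω).map
    fun x => etaLn X α n ω - x)

/-- Empirical scaled upper tail CDF
`F̂^u_n(t) = #{i ≤ n : 0 < (X_i - η̂^u_n)/ŝ^u_n ≤ t} / #{i ≤ n : X_i > η̂^u_n}`. -/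
def FUn {Ω : Type*} (X : ℕ → Ω → ℝ) (α : ℝ) (n : ℕ) (ω : Ω) (t : ℝ) : ℝ :=
  (((sample X n ω).filter fun x =>
      0 < (x - etaUn X α n ω) / sUn X α n ω ∧ (x - etaUn X α n ω) / sUn X α n ω ≤ t).card : ℝ) /
    (((sample X n ω).filter fun x => etaUn X α n ω < x).card : ℝ)

/-- Empirical scaled lower tail CDF
`F̂^l_n(t) = #{i ≤ n : 0 < (η̂^l_n - X_i)/ŝ^l_n ≤ t} / #{i ≤ n : X_i < η̂^l_n}`. -/
def FLn {Ω : Type*} (X : ℕ → Ω → ℝ) (α : ℝ) (n : ℕ) (ω : Ω) (t : ℝ) : ℝ :=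
  (((sample X n ω).filter fun x =>
      0 < (etaLn X α n ω - x) / sLn X α n ω ∧ (etaLn X α n ω - x) / sLn X α n ω ≤ t).card : ℝ) /
    (((sample X n ω).filter fun x => x < etaLn X α n ω).card : ℝ)

/-- Proportion of flagged upper tail outliers `d̂^u_n = sup_{t ≥ t₀} {F₀(t) - F̂^u_n(t)}⁺`. -/
def dUn {Ω : Type*} (X : ℕ → Ω → ℝ) (α : ℝ) (n : ℕ) (ω : Ω) : ℝ :=
  ⨆ t : Ici t0, max 0 (F0 t - FUn X α n ω t)

/-- Proportion of flagged lower tail outliers `d̂^l_n = sup_{t ≥ t₀} {F₀(t) - F̂^l_n(t)}⁺`. -/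
def dLn {Ω : Type*} (X : ℕ → Ω → ℝ) (α : ℝ) (n : ℕ) (ω : Ω) : ℝ :=
  ⨆ t : Ici t0, max 0 (F0 t - FLn X α n ω t)

/-- Upper filtering threshold `t̂^u_n = min{t : F̂^u_n(t) ≥ 1 - d̂^u_n}`. -/
def tUn {Ω : Type*} (X : ℕ → Ω → ℝ) (α : ℝ) (n : ℕ) (ω : Ω) : ℝ :=
  sInf {t : ℝ | 1 - dUn X α n ω ≤ FUn X α n ω t}

/-- Lower filtering threshold `t̂^l_n = min{t : F̂^l_n(t) ≥ 1 - d̂^l_n}`. -/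
def tLn {Ω : Type*} (X : ℕ → Ω → ℝ) (α : ℝ) (n : ℕ) (ω : Ω) : ℝ :=
  sInf {t : ℝ | 1 - dLn X α n ω ≤ FLn X α n ω t}

/-- The filter flags observation `X_i` (among the first `n`) when
`X_i > η̂^u_n + ŝ^u_n t̂^u_n` or `X_i < η̂^l_n - ŝ^l_n t̂^l_n`. -/
def flagged {Ω : Type*} (X : ℕ → Ω → ℝ) (α : ℝ) (n i : ℕ) (ω : Ω) : Prop :=
  X i ω > etaUn X α n ω + sUn X α n ω * tUn X α n ω ∨
    X i ω < etaLn X α n ω - sLn X α n ω * tLn X α n ω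

end

/-! ### Auxiliary lemmas -/

private lemma sorted_getD_le_iff (c : ℝ) :
    ∀ (l : List ℝ), l.Pairwise (· ≤ ·) → ∀ j : ℕ, j < l.length →
      (l.getD j 0 ≤ c ↔ j + 1 ≤ l.countP (fun x => decide (x ≤ c))) := by
  intro l
  induction l with
  | nil => intro _ j hj; simp at hj
  | cons a l ih =>
      intro hs j hj
      rw [List.pairwise_cons] at hs
      cases j with
      | zero =>
          simp only [List.getD_cons_zero, List.countP_cons]
          constructor
          · intro h
            have : decide (a ≤ c) = true := by simpa using h
            simp [this]
          · intro h
            by_contra hac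
            push_neg at hac
            have h0 : l.countP (fun x => decide (x ≤ c)) = 0 := by
              rw [List.countP_eq_zero]
              intro x hx
              simp only [decide_eq_true_eq]
              intro hxc
              exact absurd (le_trans (hs.1 x hx) hxc) (not_le.2 hac)
            simp [h0, not_le.2 hac] at h
      | succ j =>
          simp only [List.getD_cons_succ, List.countP_cons, List.length_cons] at *
          have hj' : j < l.length := by omega
          rw [ih hs.2 j hj']
          constructor
          · intro h
            have hgd : l.getD j 0 ≤ c := (ih hs.2 j hj').2 h
            have hmem : l.getD j 0 ∈ l := by
              rw [List.getD_eq_getElem _ _ hj']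
              exact List.getElem_mem _
            have hac : a ≤ c := le_trans (hs.1 _ hmem) hgd
            simp [hac]
            omega
          · intro h
            have : l.countP (fun x => decide (x ≤ c)) + 1 ≥ j + 1 + 1 := by
              rcases Bool.eq_false_or_eq_true (decide (a ≤ c)) with hb | hb <;> simp [hb] at h <;> omega
            omega

private lemma orderStat_le_iff {s : Multiset ℝ} {k : ℕ} (hk1 : 1 ≤ k)
    (hk2 : k ≤ Multiset.card s) (c : ℝ) :
    orderStat s k ≤ c ↔ k ≤ Multiset.card (s.filter (fun x => x ≤ c)) := by
  have hlen : (s.sort (· ≤ ·)).length = Multiset.card s := Multiset.length_sort _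
  have hj : k - 1 < (s.sort (· ≤ ·)).length := by omega
  have h := sorted_getD_le_iff c (s.sort (· ≤ ·)) (Multiset.pairwise_sort s _) (k - 1) hj
  rw [orderStat, h]
  have hcount : (s.sort (· ≤ ·)).countP (fun x => decide (x ≤ c))
      = Multiset.card (s.filter (fun x => x ≤ c)) := by
    rw [← Multiset.countP_eq_card_filter]
    conv_rhs => rw [← Multiset.sort_eq s (· ≤ ·)]
    rw [Multiset.coe_countP]
  rw [hcount]
  omega

private lemma sample_card {Ω : Type*} (X : ℕ → Ω → ℝ) (n : ℕ) (ω : Ω) :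
    Multiset.card (sample X n ω) = n := by
  simp [sample]

private lemma count_div_tendsto {Ω : Type*} [MeasurableSpace Ω] (P : Measure Ω)
    [IsProbabilityMeasure P] (μ : Measure ℝ) [IsProbabilityMeasure μ]
    (X : ℕ → Ω → ℝ) (hXmeas : ∀ i, Measurable (X i))
    (hindep : iIndepFun X P)
    (hident : ∀ i, Measure.map (X i) P = μ) (c : ℝ) :
    ∀ᵐ ω ∂P, Tendsto
      (fun n => ((Multiset.card ((sample X n ω).filter (fun x => x ≤ c)) : ℝ)) / n)
      atTop (nhds (popCDF μ c)) := by
  set f : ℝ → ℝ := (Set.Iic c).indicator (fun _ => (1:ℝ)) with hf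
  have hfmeas : Measurable f := (measurable_const).indicator measurableSet_Iic
  set Y : ℕ → Ω → ℝ := fun i ω => f (X i ω) with hY
  have hYind : ∀ i, Y i = ((X i) ⁻¹' (Set.Iic c)).indicator (fun _ => (1:ℝ)) := by
    intro i; funext ω
    simp [hY, hf, Set.indicator_apply, Set.mem_preimage]
  have hint : Integrable (Y 0) P := by
    rw [hYind 0]
    exact (integrable_const (1:ℝ)).indicator ((hXmeas 0) measurableSet_Iic)
  have hindep' : Pairwise (Function.onFun (IndepFun · · P) Y) := fun i j hij =>
    (hindep.indepFun hij).comp hfmeas hfmeas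
  have hident' : ∀ i, IdentDistrib (Y i) (Y 0) P P := by
    intro i
    have : IdentDistrib (X i) (X 0) P P :=
      ⟨(hXmeas i).aemeasurable, (hXmeas 0).aemeasurable, by rw [hident i, hident 0]⟩
    exact this.comp hfmeas
  have hmean : P[Y 0] = popCDF μ c := by
    rw [hYind 0]
    rw [show ((X 0) ⁻¹' (Set.Iic c)).indicator (fun _ => (1:ℝ)) =
        ((X 0) ⁻¹' (Set.Iic c)).indicator 1 from rfl]
    rw [integral_indicator_one ((hXmeas 0) measurableSet_Iic), measureReal_def]
    rw [popCDF, ← hident 0, Measure.map_apply (hXmeas 0) measurableSet_Iic]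
  have hsum : ∀ n ω, ∑ i ∈ Finset.range n, Y i ω
      = (Multiset.card ((sample X n ω).filter (fun x => x ≤ c)) : ℝ) := by
    intro n ω
    have h1 : ∀ i, Y i ω = if X i ω ≤ c then (1:ℝ) else 0 := by
      intro i; simp [hY, hf, Set.indicator_apply, Set.mem_Iic]
    simp only [h1]
    rw [Finset.sum_boole]
    congr 1
    rw [sample, ← Multiset.countP_eq_card_filter, Multiset.countP_map]
    rfl
  have := strong_law_ae_real Y hint hindep' hident'
  rw [hmean] at this
  filter_upwards [this] with ω hω
  have heq : (fun n : ℕ => ((Multiset.card ((sample X n ω).filter (fun x => x ≤ c)) : ℝ)) / n)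
      = fun n => (∑ i ∈ Finset.range n, Y i ω) / (n:ℝ) := by
    funext n; rw [hsum]
  rw [heq]; exact hω

private lemma quantile_cdf (μ : Measure ℝ) [IsProbabilityMeasure μ]
    (hGcont : Continuous (popCDF μ)) (hGmono : StrictMono (popCDF μ))
    {a : ℝ} (ha : a ∈ Ioo (0:ℝ) 1) :
    popCDF μ (popQuantile μ a) = a := by
  have hcdf : popCDF μ = cdf μ := by
    funext x; rw [popCDF, cdf_eq_real, measureReal_def]
  have hne : {x : ℝ | a ≤ popCDF μ x}.Nonempty := by
    have h := (tendsto_cdf_atTop μ).eventually (eventually_ge_nhds ha.2)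
    obtain ⟨x, hx⟩ := h.exists
    exact ⟨x, by rw [mem_setOf_eq, hcdf]; exact hx⟩
  have hbdd : BddBelow {x : ℝ | a ≤ popCDF μ x} := by
    have h := (tendsto_cdf_atBot μ).eventually (eventually_lt_nhds ha.1)
    obtain ⟨y, hy⟩ := h.exists
    refine ⟨y, fun x hx => ?_⟩
    by_contra hxy
    push_neg at hxy
    have : popCDF μ x < a := by
      calc popCDF μ x < popCDF μ y := hGmono hxy
        _ < a := by rw [hcdf]; exact hy
    exact absurd hx (not_le.2 this)
  have hclosed : IsClosed {x : ℝ | a ≤ popCDF μ x} := isClosed_le continuous_const hGcont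
  have hmem : popQuantile μ a ∈ {x : ℝ | a ≤ popCDF μ x} := hclosed.csInf_mem hne hbdd
  have hge : a ≤ popCDF μ (popQuantile μ a) := hmem
  rcases eq_or_lt_of_le hge with h | h
  · exact h.symm
  · exfalso
    have hopen : IsOpen {x : ℝ | a < popCDF μ x} := isOpen_lt continuous_const hGcont
    obtain ⟨ε, hε, hball⟩ := Metric.isOpen_iff.1 hopen _ h
    have hx : popQuantile μ a - ε / 2 ∈ {x : ℝ | a < popCDF μ x} := by
      apply hball
      rw [Metric.mem_ball, Real.dist_eq]
      rw [abs_of_nonpos (by linarith)]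
      linarith
    have : popQuantile μ a ≤ popQuantile μ a - ε / 2 :=
      csInf_le hbdd (show a ≤ popCDF μ _ from le_of_lt hx)
    linarith

/-- **Strong consistency of the empirical quantile.**
For an i.i.d. sample from a continuous, strictly increasing distribution `G`, for every
`a ∈ (0,1)` the sample quantile `Ĝ_n⁻¹(a) = X_(⌈na⌉)` converges almost surely
to `G⁻¹(a)` as `n → ∞`. -/
theorem empirical_quantile_consistency
    {Ω : Type*} [MeasurableSpace Ω] (P : Measure Ω) [IsProbabilityMeasure P]
    (μ : Measure ℝ) [IsProbabilityMeasure μ]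
    (hGcont : Continuous (popCDF μ)) (hGmono : StrictMono (popCDF μ))
    (X : ℕ → Ω → ℝ) (hXmeas : ∀ i, Measurable (X i))
    (hindep : iIndepFun X P)
    (hident : ∀ i, Measure.map (X i) P = μ) :
    ∀ a ∈ Ioo (0 : ℝ) 1,
      ∀ᵐ ω ∂P,
        Tendsto (fun n => orderStat (sample X n ω) (Nat.ceil ((n : ℝ) * a))) atTop
          (nhds (popQuantile μ a)) := by
  intro a ha
  set q := popQuantile μ a with hqdef
  have hGq : popCDF μ q = a := quantile_cdf μ hGcont hGmono ha
  have hae : ∀ᵐ ω ∂P, ∀ k : ℕ,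
      Tendsto (fun n => ((Multiset.card ((sample X n ω).filter
          (fun x => x ≤ q - 1 / ((k:ℝ) + 1))) : ℝ)) / n) atTop
        (nhds (popCDF μ (q - 1 / ((k:ℝ) + 1)))) ∧
      Tendsto (fun n => ((Multiset.card ((sample X n ω).filter
          (fun x => x ≤ q + 1 / ((k:ℝ) + 1))) : ℝ)) / n) atTop
        (nhds (popCDF μ (q + 1 / ((k:ℝ) + 1)))) := by
    rw [ae_all_iff]
    intro k
    exact (count_div_tendsto P μ X hXmeas hindep hident _).and
      (count_div_tendsto P μ X hXmeas hindep hident _)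
  filter_upwards [hae] with ω hω
  rw [Metric.tendsto_atTop]
  intro ε hε
  obtain ⟨k, hk⟩ := exists_nat_one_div_lt hε
  set δ : ℝ := 1 / ((k:ℝ) + 1) with hδdef
  have hδpos : 0 < δ := by positivity
  obtain ⟨h1, h2⟩ := hω k
  have hc1 : popCDF μ (q - δ) < a := by
    rw [← hGq]; exact hGmono (by linarith)
  have hc2 : a < popCDF μ (q + δ) := by
    rw [← hGq]; exact hGmono (by linarith)
  set b := popCDF μ (q + δ) with hbdef
  have e1 := h1.eventually (eventually_lt_nhds hc1)
  have e2 := h2.eventually (eventually_gt_nhds (show (a + b) / 2 < b by linarith))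
  have e3 : ∀ᶠ n : ℕ in atTop, 2 / (b - a) < (n:ℝ) :=
    (tendsto_natCast_atTop_atTop (R := ℝ)).eventually (eventually_gt_atTop _)
  rw [← eventually_atTop]
  filter_upwards [e1, e2, e3, eventually_ge_atTop 1] with n hn1 hn2 hn3 hn4
  have hnpos : (0:ℝ) < n := by
    have : (1:ℝ) ≤ n := by exact_mod_cast hn4
    linarith
  set m := Nat.ceil ((n:ℝ) * a) with hmdef
  have hmpos : 1 ≤ m := Nat.one_le_ceil_iff.2 (mul_pos hnpos ha.1)
  have hmn : m ≤ n := by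
    rw [hmdef]
    have : (n:ℝ) * a ≤ (n:ℝ) := by nlinarith [ha.2]
    calc Nat.ceil ((n:ℝ) * a) ≤ Nat.ceil ((n:ℝ)) := Nat.ceil_mono this
      _ = n := Nat.ceil_natCast n
  set c₁ := Multiset.card ((sample X n ω).filter (fun x => x ≤ q - δ)) with hc₁def
  set c₂ := Multiset.card ((sample X n ω).filter (fun x => x ≤ q + δ)) with hc₂def
  -- upper bound: m ≤ c₂
  have hba : 0 < b - a := by linarith
  have hm_lt : (m:ℝ) < (n:ℝ) * a + 1 :=
    Nat.ceil_lt_add_one (le_of_lt (mul_pos hnpos ha.1))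
  have hc₂_ge : (n:ℝ) * ((a + b) / 2) < (c₂:ℝ) := by
    rw [lt_div_iff₀ hnpos] at hn2
    linarith [hn2]
  have h2n : 2 < (n:ℝ) * (b - a) := by
    rw [div_lt_iff₀ hba] at hn3
    linarith
  have hmc₂ : m ≤ c₂ := by
    have : (m:ℝ) < (c₂:ℝ) := by nlinarith
    exact_mod_cast this.le
  have hupper : orderStat (sample X n ω) m ≤ q + δ := by
    rw [orderStat_le_iff hmpos (by rw [sample_card]; exact hmn)]
    exact hmc₂
  -- lower bound: c₁ < m
  have hc₁_lt : (c₁:ℝ) < (n:ℝ) * a := by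
    rw [div_lt_iff₀ hnpos] at hn1
    linarith
  have hmc₁ : ¬ (m ≤ c₁) := by
    intro h
    have : (m:ℝ) ≤ (c₁:ℝ) := by exact_mod_cast h
    have hceil : (n:ℝ) * a ≤ (m:ℝ) := Nat.le_ceil _
    linarith
  have hlower : q - δ < orderStat (sample X n ω) m := by
    by_contra h
    push_neg at h
    exact hmc₁ ((orderStat_le_iff hmpos (by rw [sample_card]; exact hmn) _).1 h)
  rw [Real.dist_eq, abs_lt]
  constructor <;> [linarith; linarith]
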